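/- Let X and Y be Polish spaces, let A ⊆ X × Y be analytic, and let μ be a Borel probability measure on X such that the complement of the projection proj_X(A) is μ-null (i.e., μ(proj_X(A)) = 1 for the completion of μ). Then there exists a Borel probability measure ν on X × Y whose pushforward under the first projection equals μ and whose completion assigns measure 1 to A (i.e., the complement of A is ν-null). -/

import Mathlib

open MeasureTheory



open MeasureTheory Set Filter Topology
open scoped ENNReal

namespace Lubin

/-- Measurability of pointwise `sInf` of membership sets. -/
lemma measurable_sInf_mem {X : Type*} [MeasurableSpace X] {A : ℕ → Set X}
    (hA : ∀ m, MeasurableSet (A m)) :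
    Measurable (fun x => sInf {m | x ∈ A m}) := by
  apply measurable_to_countable'
  intro n
  have : (fun x => sInf {m | x ∈ A m}) ⁻¹' {n} =
      (A n ∩ ⋂ m ∈ Finset.range n, (A m)ᶜ) ∪
        (if n = 0 then ⋂ m, (A m)ᶜ else ∅) := by
    ext x
    simp only [mem_preimage, mem_singleton_iff, mem_union, mem_inter_iff, mem_iInter,
      Finset.mem_range, mem_compl_iff]
    constructor
    · intro h
      by_cases hne : {m | x ∈ A m}.Nonempty
      · left
        have hmem := Nat.sInf_mem hne
        rw [h] at hmem
        refine ⟨hmem, fun m hm hmem' => ?_⟩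
        have : sInf {m | x ∈ A m} ≤ m := Nat.sInf_le hmem'
        omega
      · rw [Set.not_nonempty_iff_eq_empty] at hne
        have h0 : sInf {m | x ∈ A m} = 0 := by rw [hne]; exact Nat.sInf_empty
        right
        rw [h0] at h
        subst h
        simp only [if_true, mem_iInter, mem_compl_iff]
        intro m hm
        have : m ∈ {m | x ∈ A m} := hm
        rw [hne] at this
        exact this
    · rintro (⟨hn, hlt⟩ | h)
      · refine le_antisymm (Nat.sInf_le hn) ?_
        by_contra hcon
        push_neg at hcon
        have := Nat.sInf_mem (⟨n, hn⟩ : {m | x ∈ A m}.Nonempty)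
        exact hlt _ hcon this
      · split_ifs at h with h0
        · subst h0
          simp only [mem_iInter, mem_compl_iff] at h
          have : {m | x ∈ A m} = ∅ := by
            ext m; simpa using h m
          rw [this]; exact Nat.sInf_empty
        · exact absurd h (by simp)
  rw [this]
  refine MeasurableSet.union ((hA n).inter ?_) ?_
  · exact MeasurableSet.biInter (Set.to_countable _) fun m _ => (hA m).compl
  · split_ifs
    · exact MeasurableSet.iInter fun m => (hA m).compl
    · exact MeasurableSet.empty

/-- compose with a measurable function into a countable discrete parameter. -/
lemma measurable_param_comp {α β γ : Type*} [MeasurableSpace α] [MeasurableSpace γ]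
    [MeasurableSpace β] [Countable β] [MeasurableSingletonClass β]
    {g : α → β} (hg : Measurable g) {F : α → β → γ}
    (hF : ∀ b, Measurable (fun x => F x b)) : Measurable (fun x => F x (g x)) := by
  intro E hE
  have : (fun x => F x (g x)) ⁻¹' E = ⋃ b, (g ⁻¹' {b} ∩ (fun x => F x b) ⁻¹' E) := by
    ext x
    simp only [mem_preimage, mem_iUnion, mem_inter_iff, mem_singleton_iff]
    exact ⟨fun h => ⟨g x, rfl, h⟩, fun ⟨b, hb, h⟩ => hb ▸ h⟩
  rw [this]
  exact MeasurableSet.iUnion fun b => (hg (measurableSet_singleton b)).inter (hF b hE)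



section Selector

variable {X : Type*} [TopologicalSpace X] [T2Space X] [MeasurableSpace X] [BorelSpace X]
variable (π : (ℕ → ℕ) → X) (K : Set (ℕ → ℕ))

/-- the next coordinate of the lexicographically minimal selection. -/
noncomputable def nxt (x : X) (b : ℕ → ℕ) (k : ℕ) : ℕ :=
  sInf {n | ∃ z ∈ K, π z = x ∧ (∀ i < k, z i = b i) ∧ z k = n}

noncomputable def sseq (x : X) : ℕ → (ℕ → ℕ)
  | 0 => fun _ => 0
  | k + 1 => Function.update (sseq x k) k (nxt π K x (sseq x k) k)

/-- lexicographically minimal selector. -/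
noncomputable def sel (x : X) : ℕ → ℕ := fun i => sseq π K x (i + 1) i

lemma nxt_congr (x : X) {b b' : ℕ → ℕ} (k : ℕ) (h : ∀ i < k, b i = b' i) :
    nxt π K x b k = nxt π K x b' k := by
  unfold nxt
  congr 1
  ext n
  constructor
  · rintro ⟨z, hz, hx, hb, hk⟩
    exact ⟨z, hz, hx, fun i hi => by rw [hb i hi, h i hi], hk⟩
  · rintro ⟨z, hz, hx, hb, hk⟩
    exact ⟨z, hz, hx, fun i hi => by rw [hb i hi, h i hi], hk⟩

lemma sseq_eq_sel (x : X) : ∀ k i, i < k → sseq π K x k i = sel π K x i := by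
  intro k
  induction k with
  | zero => omega
  | succ k ih =>
    intro i hi
    rcases Nat.lt_succ_iff_lt_or_eq.mp hi with hik | rfl
    · rw [show sseq π K x (k+1) i = sseq π K x k i from
        Function.update_of_ne (by omega) _ _, ih i hik]
    · rfl

lemma sel_apply (x : X) (k : ℕ) : sel π K x k = nxt π K x (sel π K x) k := by
  have : sel π K x k = sseq π K x (k+1) k := rfl
  rw [this]
  show Function.update (sseq π K x k) k (nxt π K x (sseq π K x k) k) k = _
  rw [Function.update_self]
  exact nxt_congr π K x k (fun i hi => sseq_eq_sel π K x k i hi)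

lemma sel_spec (hK : IsCompact K) (hπ : Continuous π) (x : X) (hx : x ∈ π '' K) :
    sel π K x ∈ K ∧ π (sel π K x) = x := by
  set s := sel π K x with hs
  -- the decreasing compact sets
  set G : ℕ → Set (ℕ → ℕ) := fun k => {z | z ∈ K ∧ π z = x ∧ ∀ i < k, z i = s i} with hG
  have hGclosed : ∀ k, IsClosed (G k) := by
    intro k
    have h1 : IsClosed {z : ℕ → ℕ | π z = x} := isClosed_singleton.preimage hπ
    have h2 : IsClosed {z : ℕ → ℕ | ∀ i < k, z i = s i} := by
      have : {z : ℕ → ℕ | ∀ i < k, z i = s i} = ⋂ i ∈ Finset.range k,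
          (fun z : ℕ → ℕ => z i) ⁻¹' {s i} := by
        ext z; simp [Finset.mem_range]
      rw [this]
      exact isClosed_biInter fun i _ => isClosed_singleton.preimage (continuous_apply i)
    have : G k = K ∩ ({z | π z = x} ∩ {z | ∀ i < k, z i = s i}) := by
      ext z
      constructor
      · rintro ⟨h1, h2, h3⟩; exact ⟨h1, h2, h3⟩
      · rintro ⟨h1, h2, h3⟩; exact ⟨h1, h2, h3⟩
    rw [this]
    exact (hK.isClosed.inter (h1.inter h2))
  have hGcompact : ∀ k, IsCompact (G k) := by
    intro k
    have : G k ⊆ K := fun z hz => hz.1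
    exact hK.of_isClosed_subset (hGclosed k) this
  have hGmono : ∀ k, G (k + 1) ⊆ G k := by
    intro k z hz
    exact ⟨hz.1, hz.2.1, fun i hi => hz.2.2 i (by omega)⟩
  have hGne : ∀ k, (G k).Nonempty := by
    intro k
    induction k with
    | zero =>
      obtain ⟨z, hzK, hzx⟩ := hx
      exact ⟨z, hzK, hzx, fun i hi => by omega⟩
    | succ k ih =>
      obtain ⟨z, hzK, hzx, hzi⟩ := ih
      have hne : {n | ∃ w ∈ K, π w = x ∧ (∀ i < k, w i = s i) ∧ w k = n}.Nonempty :=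
        ⟨z k, z, hzK, hzx, hzi, rfl⟩
      have := Nat.sInf_mem hne
      obtain ⟨w, hwK, hwx, hwi, hwk⟩ := this
      refine ⟨w, hwK, hwx, fun i hi => ?_⟩
      rcases Nat.lt_succ_iff_lt_or_eq.mp hi with h | rfl
      · exact hwi i h
      · rw [hwk]
        exact (sel_apply π K x i).symm
  have hne : (⋂ k, G k).Nonempty :=
    IsCompact.nonempty_iInter_of_sequence_nonempty_isCompact_isClosed G hGmono hGne
      (hGcompact 0) hGclosed
  obtain ⟨z, hz⟩ := hne
  have hz0 := mem_iInter.mp hz 0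
  have hzs : z = s := by
    funext i
    exact (mem_iInter.mp hz (i + 1)).2.2 i (by omega)
  rw [← hzs]
  exact ⟨hz0.1, hz0.2.1⟩

lemma measurable_sel (hK : IsCompact K) (hπ : Continuous π) :
    Measurable (sel π K) := by
  -- main induction: each sseq · k is measurable
  have key : ∀ k, Measurable (fun x => sseq π K x k) := by
    intro k
    induction k with
    | zero => exact measurable_const
    | succ k ih =>
      -- the parameter space
      haveI : MeasurableSingletonClass (Fin k → ℕ) := by
        constructor
        intro f
        have : ({f} : Set (Fin k → ℕ)) = ⋂ i, (fun g : Fin k → ℕ => g i) ⁻¹' {f i} := by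
          ext g; simp [funext_iff]
        rw [this]
        exact MeasurableSet.iInter fun i =>
          measurable_pi_apply i (measurableSet_singleton (f i))
      have hnxt : Measurable (fun x => nxt π K x (sseq π K x k) k) := by
        set F : X → (Fin k → ℕ) → ℕ := fun x v =>
          sInf {n | x ∈ π '' (K ∩ {z | (∀ i : Fin k, z i = v i) ∧ z k = n})} with hF
        have heq : (fun x => nxt π K x (sseq π K x k) k)
            = fun x => F x (fun i : Fin k => sseq π K x k i) := by
          funext x
          simp only [hF, nxt]
          congr 1
          ext n
          constructor
          · rintro ⟨z, hzK, hzx, hzi, hzk⟩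
            exact ⟨z, ⟨hzK, fun i => hzi i i.2, hzk⟩, hzx⟩
          · rintro ⟨z, ⟨hzK, hzi, hzk⟩, hzx⟩
            exact ⟨z, hzK, hzx, fun i hi => hzi ⟨i, hi⟩, hzk⟩
        rw [heq]
        apply measurable_param_comp
        · exact measurable_pi_lambda _ fun i => (measurable_pi_apply (i : ℕ)).comp ih
        · intro v
          apply measurable_sInf_mem
          intro n
          have hclosed : IsClosed {z : ℕ → ℕ | (∀ i : Fin k, z i = v i) ∧ z k = n} := by
            have : {z : ℕ → ℕ | (∀ i : Fin k, z i = v i) ∧ z k = n}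
                = (⋂ i : Fin k, (fun z : ℕ → ℕ => z (i : ℕ)) ⁻¹' {v i}) ∩
                  ((fun z : ℕ → ℕ => z k) ⁻¹' {n}) := by
              ext z; simp
            rw [this]
            exact (isClosed_iInter fun i =>
              isClosed_singleton.preimage (continuous_apply _)).inter
              (isClosed_singleton.preimage (continuous_apply k))
          have : IsCompact (K ∩ {z | (∀ i : Fin k, z i = v i) ∧ z k = n}) :=
            hK.inter_right hclosed
          exact ((this.image hπ).isClosed).measurableSet
      apply measurable_pi_lambda
      intro i
      by_cases hik : i = k
      · subst hik
        have heq2 : (fun x => sseq π K x (i+1) i) = fun x => nxt π K x (sseq π K x i) i := by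
          funext x
          exact Function.update_self _ _ _
        rw [heq2]
        exact hnxt
      · have : (fun x => sseq π K x (k+1) i) = fun x => sseq π K x k i := by
          funext x
          exact Function.update_of_ne hik _ _
        rw [this]
        exact (measurable_pi_apply i).comp ih
  apply measurable_pi_lambda
  intro i
  exact (measurable_pi_apply i).comp (key (i + 1))

end Selector

section Core

variable {X : Type} [TopologicalSpace X] [PolishSpace X] [MeasurableSpace X] [BorelSpace X]

/-- geometric bound -/
lemma geom_bound (ε : ℝ≥0∞) (k : ℕ) : ∑ i ∈ Finset.range k, ε / 2 ^ (i + 1) ≤ ε := by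
  have h1 : ∀ i : ℕ, ε / 2 ^ (i + 1) = ε * (2⁻¹ : ℝ≥0∞) ^ (i + 1) := by
    intro i
    rw [ENNReal.div_eq_inv_mul, mul_comm, ENNReal.inv_pow]
  calc ∑ i ∈ Finset.range k, ε / 2 ^ (i + 1)
      = ε * ∑ i ∈ Finset.range k, (2⁻¹ : ℝ≥0∞) ^ (i + 1) := by
        rw [Finset.mul_sum]; exact Finset.sum_congr rfl fun i _ => h1 i
    _ ≤ ε * 1 := by
        gcongr
        have hle : ∑ i ∈ Finset.range k, (2⁻¹ : ℝ≥0∞) ^ (i + 1)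
            ≤ ∑' i : ℕ, (2⁻¹ : ℝ≥0∞) ^ (i + 1) := ENNReal.sum_le_tsum _
        refine hle.trans ?_
        have : ∑' i : ℕ, (2⁻¹ : ℝ≥0∞) ^ (i + 1) = 2⁻¹ * ∑' i : ℕ, (2⁻¹ : ℝ≥0∞) ^ i := by
          simp_rw [pow_succ, mul_comm]
          rw [ENNReal.tsum_mul_left]
        rw [this, ENNReal.tsum_geometric, ENNReal.one_sub_inv_two, inv_inv]
        rw [ENNReal.inv_mul_cancel (by norm_num) (by norm_num)]
    _ = ε := mul_one ε

/-- The compact core lemma: an analytic image can be approximated from inside in outer measure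
by images of compact sets. -/
lemma exists_compact_core (π : (ℕ → ℕ) → X) (hπ : Continuous π)
    (μ : Measure X) [IsFiniteMeasure μ] {ε : ℝ≥0∞} (hε : ε ≠ 0) :
    ∃ K : Set (ℕ → ℕ), IsCompact K ∧ μ (Set.range π) ≤ μ (π '' K) + ε := by
  letI := TopologicalSpace.upgradeIsCompletelyMetrizable X
  set Sb : (ℕ → ℕ) → ℕ → Set (ℕ → ℕ) := fun b k => {z | ∀ i < k, z i ≤ b i} with hSb
  have key : ∀ (b : ℕ → ℕ) (k : ℕ), ∃ n : ℕ,
      μ (π '' Sb b k) ≤ μ (π '' Sb (Function.update b k n) (k + 1)) + ε / 2 ^ (k + 1) := by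
    intro b k
    set T : ℕ → Set (ℕ → ℕ) := fun n => {z | (∀ i < k, z i ≤ b i) ∧ z k ≤ n} with hT
    have hTeq : ∀ n, Sb (Function.update b k n) (k + 1) = T n := by
      intro n
      ext z
      simp only [hSb, hT, mem_setOf_eq]
      constructor
      · intro h
        refine ⟨fun i hi => ?_, ?_⟩
        · have := h i (by omega)
          rwa [Function.update_of_ne (by omega)] at this
        · have := h k (by omega)
          rwa [Function.update_self] at this
      · rintro ⟨h1, h2⟩ i hi
        rcases Nat.lt_succ_iff_lt_or_eq.mp hi with hik | rfl
        · rw [Function.update_of_ne (by omega)]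
          exact h1 i hik
        · rwa [Function.update_self]
    have hTmono : Monotone fun n => π '' T n := by
      intro m n hmn
      apply Set.image_mono
      intro z hz
      exact ⟨hz.1, hz.2.trans hmn⟩
    have hTunion : (⋃ n, T n) = Sb b k := by
      ext z
      simp only [Set.mem_iUnion, hT, hSb, mem_setOf_eq]
      exact ⟨fun ⟨n, h, _⟩ => h, fun h => ⟨z k, h, le_rfl⟩⟩
    have hsup : μ (π '' Sb b k) = ⨆ n, μ (π '' T n) := by
      rw [← hTunion, Set.image_iUnion]
      exact hTmono.measure_iUnion
    have hδ : ε / 2 ^ (k + 1) ≠ 0 := by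
      simp only [ne_eq, ENNReal.div_eq_zero_iff]
      push_neg
      exact ⟨hε, ENNReal.pow_ne_top (by norm_num)⟩
    have hfin : μ (π '' Sb b k) ≠ ∞ := measure_ne_top μ _
    have hlt : μ (π '' Sb b k) - ε / 2 ^ (k + 1) < μ (π '' Sb b k) ∨ μ (π '' Sb b k) = 0 := by
      rcases eq_or_ne (μ (π '' Sb b k)) 0 with h | h
      · exact Or.inr h
      · exact Or.inl (ENNReal.sub_lt_self hfin h hδ)
    rcases hlt with hlt | h0
    · have hlt2 : μ (π '' Sb b k) - ε / 2 ^ (k + 1) < ⨆ n, μ (π '' T n) := by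
        rw [← hsup]; exact hlt
      obtain ⟨n, hn⟩ := lt_iSup_iff.mp hlt2
      refine ⟨n, ?_⟩
      rw [hTeq n]
      exact tsub_le_iff_right.mp hn.le
    · exact ⟨0, by rw [h0]; exact zero_le⟩
  choose nf hnf using key
  set bseq : ℕ → (ℕ → ℕ) := fun k =>
    Nat.rec (fun _ => 0) (fun k bk => Function.update bk k (nf bk k)) k with hbseq
  have hbsucc : ∀ k, bseq (k + 1) = Function.update (bseq k) k (nf (bseq k) k) := fun k => rfl
  set σ : ℕ → ℕ := fun i => bseq (i + 1) i with hσ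
  have hcoh : ∀ k i, i < k → bseq k i = σ i := by
    intro k
    induction k with
    | zero => omega
    | succ k ih =>
      intro i hi
      rcases Nat.lt_succ_iff_lt_or_eq.mp hi with hik | rfl
      · rw [hbsucc, Function.update_of_ne (by omega)]
        exact ih i hik
      · rfl
  have hSbcoh : ∀ k, Sb (bseq k) k = Sb σ k := by
    intro k
    ext z
    simp only [hSb, mem_setOf_eq]
    constructor
    · intro h i hi; rw [← hcoh k i hi]; exact h i hi
    · intro h i hi; rw [hcoh k i hi]; exact h i hi
  have hinv : ∀ k, μ (Set.range π) ≤ μ (π '' Sb σ k) + ∑ i ∈ Finset.range k, ε / 2 ^ (i + 1) := by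
    intro k
    induction k with
    | zero =>
      simp only [Finset.range_zero, Finset.sum_empty, add_zero]
      apply measure_mono
      rw [show Sb σ 0 = Set.univ from by ext z; simp [hSb], Set.image_univ]
    | succ k ih =>
      have step := hnf (bseq k) k
      rw [hSbcoh k] at step
      have : Sb (Function.update (bseq k) k (nf (bseq k) k)) (k + 1) = Sb σ (k + 1) := by
        rw [← hbsucc k]
        exact hSbcoh (k + 1)
      rw [this] at step
      calc μ (Set.range π) ≤ μ (π '' Sb σ k) + ∑ i ∈ Finset.range k, ε / 2 ^ (i + 1) := ih
        _ ≤ (μ (π '' Sb σ (k + 1)) + ε / 2 ^ (k + 1)) + ∑ i ∈ Finset.range k, ε / 2 ^ (i + 1) := by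
            gcongr
        _ = μ (π '' Sb σ (k + 1)) + ∑ i ∈ Finset.range (k + 1), ε / 2 ^ (i + 1) := by
            rw [Finset.sum_range_succ]; ring
  have hinv' : ∀ k, μ (Set.range π) ≤ μ (π '' Sb σ k) + ε := by
    intro k
    exact (hinv k).trans (by gcongr; exact geom_bound ε k)
  -- the compact set
  set K : Set (ℕ → ℕ) := Set.pi Set.univ (fun i => Set.Iic (σ i)) with hK
  have hKc : IsCompact K :=
    isCompact_univ_pi fun i => (Set.finite_Iic (σ i)).isCompact
  refine ⟨K, hKc, ?_⟩
  set F : ℕ → Set X := fun k => closure (π '' Sb σ k) with hF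
  have hFanti : Antitone F := by
    intro m n hmn
    apply closure_mono
    apply Set.image_mono
    intro z hz i hi
    exact hz i (lt_of_lt_of_le hi hmn)
  have hFmeas : ∀ k, NullMeasurableSet (F k) μ :=
    fun k => isClosed_closure.measurableSet.nullMeasurableSet
  have hsub : (⋂ k, F k) ⊆ π '' K := by
    intro x hx
    have hxk : ∀ k : ℕ, ∃ z, z ∈ Sb σ k ∧ dist x (π z) < 1 / (k + 1) := by
      intro k
      have hx' : x ∈ closure (π '' Sb σ k) := Set.mem_iInter.mp hx k
      obtain ⟨y, hy, hd⟩ := Metric.mem_closure_iff.mp hx' (1 / (k + 1)) (by positivity)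
      obtain ⟨z, hz, rfl⟩ := hy
      exact ⟨z, hz, hd⟩
    choose z hzS hzd using hxk
    set y : ℕ → (ℕ → ℕ) := fun k i => min (z k i) (σ i) with hy
    have hyK : ∀ k, y k ∈ K := by
      intro k
      intro i _
      exact Set.mem_Iic.mpr (min_le_right _ _)
    obtain ⟨a, haK, φ, hφ, hconv⟩ := hKc.tendsto_subseq hyK
    have htz : Tendsto (fun j => z (φ j)) atTop (𝓝 a) := by
      rw [tendsto_pi_nhds]
      intro i
      have h1 : Tendsto (fun j => y (φ j) i) atTop (𝓝 (a i)) := by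
        have := tendsto_pi_nhds.mp hconv i
        exact this
      apply h1.congr'
      filter_upwards [eventually_ge_atTop (i + 1)] with j hj
      have hφj : i < φ j := lt_of_lt_of_le (by omega) (hφ.le_apply.trans (le_refl (φ j)))
      have : z (φ j) i ≤ σ i := hzS (φ j) i (by
        have : j ≤ φ j := hφ.le_apply
        omega)
      simp only [hy]
      rw [min_eq_left this]
    have hπz : Tendsto (fun j => π (z (φ j))) atTop (𝓝 x) := by
      rw [tendsto_iff_dist_tendsto_zero]
      apply squeeze_zero (fun j => dist_nonneg)
        (fun j => ?_) tendsto_one_div_add_atTop_nhds_zero_nat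
      · have h1 : dist (π (z (φ j))) x < 1 / (φ j + 1) := by
          rw [dist_comm]; exact hzd (φ j)
        have h2 : (1 : ℝ) / (φ j + 1) ≤ 1 / (j + 1) := by
          apply one_div_le_one_div_of_le (by positivity)
          have hj : j ≤ φ j := hφ.le_apply
          exact_mod_cast Nat.succ_le_succ hj
        exact h1.le.trans h2
    have hπa : Tendsto (fun j => π (z (φ j))) atTop (𝓝 (π a)) :=
      (hπ.tendsto a).comp htz
    have : x = π a := tendsto_nhds_unique hπz hπa
    exact ⟨a, haK, this.symm⟩
  have hiInf : μ (⋂ k, F k) = ⨅ k, μ (F k) :=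
    hFanti.measure_iInter hFmeas ⟨0, measure_ne_top μ _⟩
  have h1 : μ (Set.range π) ≤ μ (⋂ k, F k) + ε := by
    rw [hiInf, ENNReal.iInf_add]
    apply le_iInf
    intro k
    exact (hinv' k).trans (by gcongr; exact subset_closure)
  exact h1.trans (by gcongr)

end Core

end Lubin


open Lubin

/-- **Lubin's measure extension lemma.** If `X`, `Y` are Polish spaces,
`A ⊆ X × Y` is analytic, and `μ` is a Borel probability measure on `X` whose completion assigns
measure `1` to the projection of `A` to `X` (i.e. the complement of the projection is `μ`-null),
then there is a Borel probability measure `ν` on `X × Y` whose pushforward under the first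
projection is `μ` and whose completion assigns measure `1` to `A` (the complement of `A` is
`ν`-null). -/
theorem stmt_1
    {X Y : Type} [TopologicalSpace X] [PolishSpace X] [MeasurableSpace X] [BorelSpace X]
    [TopologicalSpace Y] [PolishSpace Y] [MeasurableSpace Y] [BorelSpace Y]
    (A : Set (X × Y)) (hA : MeasureTheory.AnalyticSet A)
    (μ : ProbabilityMeasure X)
    (hμ : (μ : Measure X) (Prod.fst '' A)ᶜ = 0) :
    ∃ ν : ProbabilityMeasure (X × Y),
      (ν : Measure (X × Y)).map Prod.fst = (μ : Measure X) ∧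
      (ν : Measure (X × Y)) Aᶜ = 0 := by
  rw [MeasureTheory.AnalyticSet] at hA
  rcases hA with rfl | ⟨g, hg, hrange⟩
  · exfalso
    simp only [Set.image_empty, Set.compl_empty] at hμ
    have : (μ : Measure X) Set.univ = 1 := measure_univ
    rw [hμ] at this
    exact zero_ne_one this
  -- main case
  set π : (ℕ → ℕ) → X := Prod.fst ∘ g with hπdef
  have hπ : Continuous π := continuous_fst.comp hg
  have hrangeπ : Set.range π = Prod.fst '' A := by
    rw [hπdef, Set.range_comp, hrange]
  have hμπ : (μ : Measure X) (Set.range π)ᶜ = 0 := by rw [hrangeπ]; exact hμ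
  have hμfull : (μ : Measure X) (Set.range π) = 1 := by
    refine le_antisymm prob_le_one ?_
    calc (1 : ℝ≥0∞) = (μ : Measure X) (Set.range π ∪ (Set.range π)ᶜ) := by
          rw [Set.union_compl_self]; exact measure_univ.symm
      _ ≤ (μ : Measure X) (Set.range π) + (μ : Measure X) (Set.range π)ᶜ := measure_union_le _ _
      _ = (μ : Measure X) (Set.range π) := by rw [hμπ, add_zero]
  -- compact cores
  have hKm : ∀ m : ℕ, ∃ K : Set (ℕ → ℕ), IsCompact K ∧
      (μ : Measure X) (Set.range π) ≤ (μ : Measure X) (π '' K) + (↑(m + 1) : ℝ≥0∞)⁻¹ := by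
    intro m
    exact exists_compact_core π hπ (μ : Measure X)
      (by simp)
  choose K hKc hKb using hKm
  set K' : ℕ → Set (ℕ → ℕ) := fun m => ⋃ j ∈ Set.Iic m, K j with hK'
  have hK'c : ∀ m, IsCompact (K' m) := fun m =>
    (Set.finite_Iic m).isCompact_biUnion (fun j _ => hKc j)
  have hK'mono : Monotone K' := fun m n hmn =>
    Set.biUnion_subset_biUnion_left (Set.Iic_subset_Iic.mpr hmn)
  have hKK' : ∀ m, K m ⊆ K' m := fun m =>
    Set.subset_biUnion_of_mem (Set.mem_Iic.mpr le_rfl)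
  set B : ℕ → Set X := fun m => π '' K' m with hB
  have hBc : ∀ m, IsCompact (B m) := fun m => (hK'c m).image hπ
  have hBmeas : ∀ m, MeasurableSet (B m) := fun m => (hBc m).isClosed.measurableSet
  have hBmono : Monotone B := fun m n hmn => Set.image_mono (hK'mono hmn)
  have hBb : ∀ m, (1 : ℝ≥0∞) ≤ (μ : Measure X) (B m) + (↑(m + 1) : ℝ≥0∞)⁻¹ := by
    intro m
    rw [← hμfull]
    exact (hKb m).trans (by gcongr; exact Set.image_mono (hKK' m))
  have hBfull : (μ : Measure X) (⋃ m, B m) = 1 := by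
    refine le_antisymm prob_le_one ?_
    refine ENNReal.le_of_forall_pos_le_add fun δ hδ _ => ?_
    obtain ⟨n, hn⟩ := ENNReal.exists_inv_nat_lt (by exact_mod_cast hδ.ne' : (δ : ℝ≥0∞) ≠ 0)
    calc (1 : ℝ≥0∞) ≤ (μ : Measure X) (B n) + (↑(n + 1) : ℝ≥0∞)⁻¹ := hBb n
      _ ≤ (μ : Measure X) (⋃ m, B m) + (↑(n + 1) : ℝ≥0∞)⁻¹ := by
          gcongr; exact Set.subset_iUnion B n
      _ ≤ (μ : Measure X) (⋃ m, B m) + δ := by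
          gcongr
          refine le_trans ?_ hn.le
          apply ENNReal.inv_le_inv.mpr
          exact_mod_cast Nat.le_succ n
  have hBcompl : (μ : Measure X) (⋃ m, B m)ᶜ = 0 := by
    rw [measure_compl (MeasurableSet.iUnion hBmeas) (measure_ne_top _ _), hBfull, measure_univ,
      tsub_self]
  -- selectors
  have hsel : ∀ m, sel π (K' m) ∈ {s : X → ℕ → ℕ | Measurable s} := fun m =>
    measurable_sel π (K' m) (hK'c m) hπ
  have hselspec : ∀ m, ∀ x ∈ B m, sel π (K' m) x ∈ K' m ∧ π (sel π (K' m) x) = x :=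
    fun m x hx => sel_spec π (K' m) (hK'c m) hπ x hx
  -- disjointify
  set D : ℕ → Set X := disjointed B with hD
  have hDmeas : ∀ m, MeasurableSet (D m) := MeasurableSet.disjointed hBmeas
  have hDsub : ∀ m, D m ⊆ B m := fun m => disjointed_subset B m
  have hDdisj : Pairwise (Function.onFun Disjoint D) := disjoint_disjointed B
  have hDunion : (⋃ m, D m) = ⋃ m, B m := iUnion_disjointed
  have hg' : Measurable g := hg.measurable
  set f : ℕ → X → X × Y := fun m => g ∘ sel π (K' m) with hf
  have hfmeas : ∀ m, Measurable (f m) := fun m => hg'.comp (hsel m)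
  set ν : Measure (X × Y) :=
    Measure.sum (fun m => ((μ : Measure X).restrict (D m)).map (f m)) with hν
  -- pushforward equals μ
  have hmap : ν.map Prod.fst = (μ : Measure X) := by
    ext E hE
    rw [Measure.map_apply measurable_fst hE, hν,
      Measure.sum_apply _ (measurable_fst hE)]
    have hterm : ∀ m, (((μ : Measure X).restrict (D m)).map (f m)) (Prod.fst ⁻¹' E)
        = (μ : Measure X) (E ∩ D m) := by
      intro m
      rw [Measure.map_apply (hfmeas m) (measurable_fst hE),
        Measure.restrict_apply ((hfmeas m) (measurable_fst hE))]
      congr 1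
      ext x
      simp only [Set.mem_inter_iff, Set.mem_preimage]
      constructor
      · rintro ⟨hfx, hxD⟩
        have hxB : x ∈ B m := hDsub m hxD
        have := (hselspec m x hxB).2
        refine ⟨?_, hxD⟩
        have : Prod.fst (f m x) = x := this
        rwa [this] at hfx
      · rintro ⟨hxE, hxD⟩
        have hxB : x ∈ B m := hDsub m hxD
        have hfix : Prod.fst (f m x) = x := (hselspec m x hxB).2
        refine ⟨?_, hxD⟩
        show Prod.fst (f m x) ∈ E
        rwa [hfix]
    rw [tsum_congr hterm]
    have : ∑' m, (μ : Measure X) (E ∩ D m) = (μ : Measure X) (⋃ m, E ∩ D m) := by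
      rw [measure_iUnion (fun i j hij => Disjoint.mono
        (Set.inter_subset_right) (Set.inter_subset_right) (hDdisj hij))
        (fun m => hE.inter (hDmeas m))]
    rw [this, ← Set.inter_iUnion, hDunion]
    -- μ (E ∩ ⋃ B) = μ E
    have h1 : (μ : Measure X) E ≤ (μ : Measure X) (E ∩ ⋃ m, B m) := by
      calc (μ : Measure X) E
          = (μ : Measure X) ((E ∩ ⋃ m, B m) ∪ (E ∩ (⋃ m, B m)ᶜ)) := by
            rw [← Set.inter_union_distrib_left, Set.union_compl_self, Set.inter_univ]
        _ ≤ (μ : Measure X) (E ∩ ⋃ m, B m) + (μ : Measure X) (E ∩ (⋃ m, B m)ᶜ) :=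
            measure_union_le _ _
        _ ≤ (μ : Measure X) (E ∩ ⋃ m, B m) + (μ : Measure X) ((⋃ m, B m)ᶜ) := by
            gcongr; exact Set.inter_subset_right
        _ = (μ : Measure X) (E ∩ ⋃ m, B m) := by rw [hBcompl, add_zero]
    exact le_antisymm (measure_mono Set.inter_subset_left) h1
  -- ν gives Aᶜ measure zero
  have hnull : ν Aᶜ = 0 := by
    rw [hν, Measure.sum_apply_eq_zero]
    intro m
    have hsub1 : Aᶜ ⊆ (g '' K' m)ᶜ := by
      apply Set.compl_subset_compl.mpr
      rw [← hrange]
      exact Set.image_subset_range g (K' m)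
    have hmeas1 : MeasurableSet ((g '' K' m)ᶜ) :=
      (((hK'c m).image hg).isClosed.measurableSet).compl
    refine le_antisymm ?_ zero_le
    calc (((μ : Measure X).restrict (D m)).map (f m)) Aᶜ
        ≤ (((μ : Measure X).restrict (D m)).map (f m)) ((g '' K' m)ᶜ) :=
          measure_mono hsub1
      _ = ((μ : Measure X).restrict (D m)) ((f m) ⁻¹' (g '' K' m)ᶜ) :=
          Measure.map_apply (hfmeas m) hmeas1
      _ = (μ : Measure X) ((f m) ⁻¹' (g '' K' m)ᶜ ∩ D m) :=
          Measure.restrict_apply ((hfmeas m) hmeas1)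
      _ = 0 := by
          have hempty : (f m) ⁻¹' (g '' K' m)ᶜ ∩ D m = ∅ := by
            ext x
            simp only [Set.mem_inter_iff, Set.mem_preimage, Set.mem_compl_iff,
              Set.mem_empty_iff_false, iff_false, not_and]
            intro hfx hxD
            exact hfx ⟨sel π (K' m) x, (hselspec m x (hDsub m hxD)).1, rfl⟩
          rw [hempty, measure_empty]
  -- ν is a probability measure
  have huniv : ν Set.univ = 1 := by
    rw [hν, Measure.sum_apply _ MeasurableSet.univ]
    have hterm : ∀ m, (((μ : Measure X).restrict (D m)).map (f m)) Set.univ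
        = (μ : Measure X) (D m) := by
      intro m
      rw [Measure.map_apply (hfmeas m) MeasurableSet.univ, Set.preimage_univ,
        Measure.restrict_apply MeasurableSet.univ, Set.univ_inter]
    rw [tsum_congr hterm, ← measure_iUnion hDdisj hDmeas, hDunion, hBfull]
  have hprob : IsProbabilityMeasure ν := ⟨huniv⟩
  exact ⟨⟨ν, hprob⟩, hmap, hnull⟩
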